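/- Let K be a field with |K| ≥ r+1 and r ≤ min{m,n}. Then the maximal dimension of an affine subspace S of K^{m×n} such that every element of S is in row echelon form and every element of S has rank exactly r equals r·n − r(r+1)/2. -/

import Mathlib

/-- Row echelon form. -/
def RowEchelon {K : Type*} [Field K] {m n : ℕ} (A : Matrix (Fin m) (Fin n) K) : Prop :=
  ∀ i₁ i₂ : Fin m, i₁ < i₂ → ∀ j : Fin n, A i₂ j ≠ 0 → ∃ j' : Fin n, j' < j ∧ A i₁ j' ≠ 0

open Module Finset Submodule

set_option synthInstance.maxHeartbeats 1000000
set_option maxHeartbeats 1000000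

namespace Stmt10


variable {K : Type*} [Field K] {m n r s : ℕ}

/-- Selecting rows (with arbitrary repetition) does not increase rank. -/
lemma rank_submatrix_rows_le (A : Matrix (Fin m) (Fin n) K) (f : Fin s → Fin m) :
    (A.submatrix f id).rank ≤ A.rank := by
  rw [Matrix.rank_eq_finrank_span_row, Matrix.rank_eq_finrank_span_row]
  apply Submodule.finrank_mono
  apply Submodule.span_mono
  rintro _ ⟨k, rfl⟩
  exact ⟨f k, rfl⟩

lemma rank_submatrix_le' (A : Matrix (Fin m) (Fin n) K) (f : Fin s → Fin m) (g : Fin s → Fin n) :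
    (A.submatrix f g).rank ≤ A.rank := by
  have h2 : ((A.submatrix f id).submatrix id g).rank ≤ (A.submatrix f id).rank := by
    rw [← Matrix.rank_transpose, ← Matrix.rank_transpose (A.submatrix f id),
      Matrix.transpose_submatrix]
    exact rank_submatrix_rows_le _ g
  have h3 : (A.submatrix f id).submatrix id g = A.submatrix f g := by
    rw [Matrix.submatrix_submatrix]; rfl
  rw [h3] at h2
  exact h2.trans (rank_submatrix_rows_le A f)

lemma le_rank_triangular (A : Matrix (Fin m) (Fin n) K) (f : Fin s → Fin m) (g : Fin s → Fin n)
    (hd : ∀ k, A (f k) (g k) ≠ 0) (hl : ∀ k l, l < k → A (f k) (g l) = 0) :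
    s ≤ A.rank := by
  have ht : (A.submatrix f g).BlockTriangular id := fun k l h => hl k l h
  have hdet : (A.submatrix f g).det ≠ 0 := by
    rw [Matrix.det_of_upperTriangular ht]
    exact Finset.prod_ne_zero_iff.mpr fun k _ => hd k
  have hru : (A.submatrix f g).rank = s := by
    rw [Matrix.rank_of_isUnit _ (by rwa [Matrix.isUnit_iff_isUnit_det, isUnit_iff_ne_zero]),
      Fintype.card_fin]
  rw [← hru]
  exact rank_submatrix_le' A f g

lemma rank_le_of_rows (A : Matrix (Fin m) (Fin n) K) (t : ℕ)
    (h : ∀ i : Fin m, t ≤ (i : ℕ) → A i = 0) : A.rank ≤ t := by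
  classical
  set v : Fin t → (Fin n → K) := fun k => if h' : (k : ℕ) < m then A ⟨k, h'⟩ else 0 with hv
  rw [Matrix.rank_eq_finrank_span_row]
  have hsub : Set.range A ⊆ insert 0 (Set.range v) := by
    rintro _ ⟨i, rfl⟩
    by_cases hi : t ≤ (i : ℕ)
    · rw [h i hi]; exact Set.mem_insert _ _
    · refine Set.mem_insert_of_mem _ ⟨⟨(i : ℕ), by omega⟩, ?_⟩
      simp [hv, i.isLt]
  calc finrank K (span K (Set.range A)) ≤ finrank K (span K (insert 0 (Set.range v))) :=
        Submodule.finrank_mono (Submodule.span_mono hsub)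
    _ = finrank K (span K (Set.range v)) := by rw [Submodule.span_insert_zero]
    _ ≤ t := by simpa [Set.finrank] using finrank_range_le_card v

lemma echelon_col_ge {A : Matrix (Fin m) (Fin n) K} (hA : RowEchelon A) :
    ∀ (i : Fin m) (j : Fin n), A i j ≠ 0 → (i : ℕ) ≤ (j : ℕ) := by
  have H : ∀ k : ℕ, ∀ i : Fin m, ∀ j : Fin n, (i : ℕ) = k → A i j ≠ 0 → (i : ℕ) ≤ (j : ℕ) := by
    intro k
    induction k with
    | zero => intro i j hi _; omega
    | succ k ih =>
      intro i j hi hne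
      have him := i.isLt
      have hk : (⟨k, by omega⟩ : Fin m) < i := by
        rw [Fin.lt_def]; simp; omega
      obtain ⟨j', hj', hne'⟩ := hA _ i hk j hne
      have h1 := ih ⟨k, by omega⟩ j' rfl hne'
      have hj'j : (j' : ℕ) < (j : ℕ) := hj'
      simp at h1
      omega
  exact fun i j => H (i : ℕ) i j rfl

/-- minimal nonzero column of a nonzero row -/
lemma pivot_spec (A : Matrix (Fin m) (Fin n) K) (i : Fin m) (h : A i ≠ 0) :
    ∃ p : Fin n, A i p ≠ 0 ∧ ∀ j, j < p → A i j = 0 := by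
  classical
  have hne : (univ.filter fun j => A i j ≠ 0).Nonempty := by
    rw [Finset.filter_nonempty_iff]
    obtain ⟨j, hj⟩ := Function.ne_iff.mp h
    exact ⟨j, mem_univ _, hj⟩
  refine ⟨(univ.filter fun j => A i j ≠ 0).min' hne, ?_, ?_⟩
  · have := Finset.min'_mem _ hne
    simpa using this
  · intro j hj
    by_contra hne'
    have : (univ.filter fun j => A i j ≠ 0).min' hne ≤ j :=
      Finset.min'_le _ _ (by simpa using hne')
    exact absurd hj (not_lt.mpr this)

lemma echelon_struct {A : Matrix (Fin m) (Fin n) K} (hA : RowEchelon A) (hr : A.rank = r) :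
    (∀ i : Fin m, r ≤ (i : ℕ) → A i = 0) ∧ (∀ i : Fin m, (i : ℕ) < r → A i ≠ 0) := by
  classical
  have row_ne : ∀ i : Fin m, A i ≠ 0 → ∀ i₁ : Fin m, i₁ ≤ i → A i₁ ≠ 0 := by
    intro i hi i₁ hle
    rcases eq_or_lt_of_le hle with h | h
    · rw [h]; exact hi
    · obtain ⟨j, hj⟩ := Function.ne_iff.mp hi
      obtain ⟨j', _, hne'⟩ := hA i₁ i h j hj
      exact Function.ne_iff.mpr ⟨j', hne'⟩
  constructor
  · intro i hi
    by_contra hne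
    -- rows 0..i nonzero; build triangular selection of size i+1
    have hnz : ∀ k : Fin ((i : ℕ) + 1), A ⟨(k : ℕ), by omega⟩ ≠ 0 := by
      intro k
      refine row_ne i hne ⟨(k : ℕ), by omega⟩ ?_
      rw [Fin.le_def]
      simp
      omega
    have hpiv : ∀ k : Fin ((i : ℕ) + 1), ∃ p : Fin n,
        A ⟨(k : ℕ), by omega⟩ p ≠ 0 ∧ ∀ j, j < p → A ⟨(k : ℕ), by omega⟩ j = 0 :=
      fun k => pivot_spec A _ (hnz k)
    choose p hp1 hp2 using hpiv
    have hmono : ∀ k l : Fin ((i : ℕ) + 1), l < k → p l < p k := by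
      intro k l hlk
      obtain ⟨j', hj', hne'⟩ := hA ⟨(l : ℕ), by omega⟩ ⟨(k : ℕ), by omega⟩
        (by rw [Fin.lt_def]; exact hlk) (p k) (hp1 k)
      have : p l ≤ j' := by
        by_contra hc
        exact hne' (hp2 l j' (not_le.mp hc))
      exact lt_of_le_of_lt this hj'
    have := le_rank_triangular A (fun k : Fin ((i : ℕ) + 1) => ⟨(k : ℕ), by omega⟩) p hp1
      (fun k l h => hp2 k (p l) (hmono k l h))
    rw [hr] at this
    omega
  · intro i hi
    by_contra hz
    have hzz : ∀ i' : Fin m, (i : ℕ) ≤ (i' : ℕ) → A i' = 0 := by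
      intro i' hle
      by_contra hne
      exact (row_ne i' hne i (by rwa [Fin.le_def])) hz
    have := rank_le_of_rows A (i : ℕ) hzz
    omega

def zeroOn (K : Type*) [Field K] {m n : ℕ} (P : Fin m → Fin n → Prop)
    [∀ i j, Decidable (P i j)] : Submodule K (Matrix (Fin m) (Fin n) K) where
  carrier := {A | ∀ i j, ¬ P i j → A i j = 0}
  add_mem' := fun {a b} ha hb i j h => by
    simp [Matrix.add_apply, ha i j h, hb i j h]
  zero_mem' := fun i j _ => rfl
  smul_mem' := fun c {a} ha i j h => by
    simp [Matrix.smul_apply, ha i j h]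

lemma mem_zeroOn {P : Fin m → Fin n → Prop} [∀ i j, Decidable (P i j)]
    {A : Matrix (Fin m) (Fin n) K} :
    A ∈ zeroOn K P ↔ ∀ i j, ¬ P i j → A i j = 0 := Iff.rfl

lemma finrank_zeroOn (P : Fin m → Fin n → Prop) [∀ i j, Decidable (P i j)] :
    finrank K (zeroOn K P) = Fintype.card {p : Fin m × Fin n // P p.1 p.2} := by
  let e : zeroOn K P ≃ₗ[K] ({p : Fin m × Fin n // P p.1 p.2} → K) :=
  { toFun := fun A q => (A : Matrix (Fin m) (Fin n) K) q.1.1 q.1.2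
    map_add' := fun _ _ => rfl
    map_smul' := fun _ _ => rfl
    invFun := fun c => ⟨Matrix.of fun i j => if h : P i j then c ⟨(i, j), h⟩ else 0,
      fun i j h => by simp [h]⟩
    left_inv := fun A => by
      apply Subtype.ext
      ext i j
      by_cases h : P i j
      · simp [h]
      · simp [h, A.2 i j h]
    right_inv := fun c => by
      funext q
      obtain ⟨⟨i, j⟩, h⟩ := q
      simp [h] }
  rw [e.finrank_eq, Module.finrank_fintype_fun_eq_card]

lemma card_subtype_prod (P : Fin m → Fin n → Prop) [∀ i j, Decidable (P i j)] :
    Fintype.card {p : Fin m × Fin n // P p.1 p.2}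
      = ∑ i : Fin m, Fintype.card {j : Fin n // P i j} := by
  rw [Fintype.card_congr (Equiv.subtypeProdEquivSigmaSubtype P), Fintype.card_sigma]

lemma sum_ite_range (F : ℕ → ℕ) (hrm : r ≤ m) :
    ∑ k ∈ range m, (if k < r then F k else 0) = ∑ k ∈ range r, F k := by
  rw [← Finset.sum_subset (Finset.range_subset_range.mpr hrm)
    (fun x _ hx => if_neg (by simpa using hx))]
  exact Finset.sum_congr rfl fun x hx => if_pos (by simpa using hx)

lemma card1 (hrm : r ≤ m) (hrn : r ≤ n) :
    Fintype.card {p : Fin m × Fin n // (p.1 : ℕ) < r ∧ (p.1 : ℕ) < (p.2 : ℕ)}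
      = r * n - r * (r + 1) / 2 := by
  rw [card_subtype_prod (fun i j => (i : ℕ) < r ∧ (i : ℕ) < (j : ℕ))]
  have hinner : ∀ i : Fin m, Fintype.card {j : Fin n // (i : ℕ) < r ∧ (i : ℕ) < (j : ℕ)}
      = if (i : ℕ) < r then n - 1 - (i : ℕ) else 0 := by
    intro i
    by_cases hi : (i : ℕ) < r
    · rw [if_pos hi]
      have hin : (i : ℕ) < n := lt_of_lt_of_le hi hrn
      have : Fintype.card {j : Fin n // (i : ℕ) < r ∧ (i : ℕ) < (j : ℕ)}
          = Fintype.card (Set.Ioi (⟨(i : ℕ), hin⟩ : Fin n)) := by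
        apply Fintype.card_congr
        apply Equiv.subtypeEquivRight
        intro j
        simp [Set.mem_Ioi, Fin.lt_def, hi]
      rw [this, Fintype.card_Ioi, Fin.card_Ioi]
    · rw [if_neg hi]
      rw [Fintype.card_eq_zero_iff]
      exact ⟨fun q => hi q.2.1⟩
  rw [Fintype.sum_congr _ _ hinner, Fin.sum_univ_eq_sum_range (fun k => if k < r then n - 1 - k else 0),
    sum_ite_range _ hrm]
  -- arithmetic
  have h1 : (∑ k ∈ range r, (n - 1 - k)) + ∑ k ∈ range r, (k + 1) = r * n := by
    rw [← Finset.sum_add_distrib]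
    rw [Finset.sum_congr rfl (fun k hk => by
      have : k < r := Finset.mem_range.mp hk
      omega : ∀ k ∈ range r, (n - 1 - k) + (k + 1) = n)]
    rw [Finset.sum_const, card_range, smul_eq_mul]
  have h2 : (∑ k ∈ range r, (k + 1)) * 2 = r * (r + 1) := by
    have h3 := Finset.sum_range_id_mul_two (r + 1)
    rw [Finset.sum_range_succ'] at h3
    simpa [mul_comm] using h3
  omega

lemma card2 (hrm : r ≤ m) (hrn : r ≤ n) :
    Fintype.card {p : Fin m × Fin n // (p.1 : ℕ) < r ∧ (p.1 : ℕ) ≤ (p.2 : ℕ)}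
      = ∑ k ∈ range r, (n - k) := by
  rw [card_subtype_prod (fun i j => (i : ℕ) < r ∧ (i : ℕ) ≤ (j : ℕ))]
  have hinner : ∀ i : Fin m, Fintype.card {j : Fin n // (i : ℕ) < r ∧ (i : ℕ) ≤ (j : ℕ)}
      = if (i : ℕ) < r then n - (i : ℕ) else 0 := by
    intro i
    by_cases hi : (i : ℕ) < r
    · rw [if_pos hi]
      have hin : (i : ℕ) < n := lt_of_lt_of_le hi hrn
      have : Fintype.card {j : Fin n // (i : ℕ) < r ∧ (i : ℕ) ≤ (j : ℕ)}
          = Fintype.card (Set.Ici (⟨(i : ℕ), hin⟩ : Fin n)) := by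
        apply Fintype.card_congr
        apply Equiv.subtypeEquivRight
        intro j
        simp [Set.mem_Ici, Fin.le_def, hi]
      rw [this, Fintype.card_Ici, Fin.card_Ici]
    · rw [if_neg hi]
      rw [Fintype.card_eq_zero_iff]
      exact ⟨fun q => hi q.2.1⟩
  rw [Fintype.sum_congr _ _ hinner, Fin.sum_univ_eq_sum_range (fun k => if k < r then n - k else 0),
    sum_ite_range _ hrm]

lemma lower (hrm : r ≤ m) (hrn : r ≤ n) :
    ∃ S : AffineSubspace K (Matrix (Fin m) (Fin n) K),
        (S : Set (Matrix (Fin m) (Fin n) K)).Nonempty ∧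
        (∀ A ∈ S, RowEchelon A) ∧ (∀ A ∈ S, A.rank = r) ∧
        Fintype.card {p : Fin m × Fin n // (p.1 : ℕ) < r ∧ (p.1 : ℕ) < (p.2 : ℕ)}
          = Module.finrank K S.direction := by
  classical
  set A₀ : Matrix (Fin m) (Fin n) K :=
    Matrix.of fun i j => if (i : ℕ) = (j : ℕ) ∧ (i : ℕ) < r then 1 else 0 with hA₀
  set V : Submodule K (Matrix (Fin m) (Fin n) K) :=
    zeroOn K (fun i j => (i : ℕ) < r ∧ (i : ℕ) < (j : ℕ)) with hV
  have hchar : ∀ B ∈ AffineSubspace.mk' A₀ V, ∀ (i : Fin m) (j : Fin n),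
      ¬ ((i : ℕ) < r ∧ (i : ℕ) < (j : ℕ)) → B i j = A₀ i j := by
    intro B hB i j h
    have hmem := AffineSubspace.mem_mk'.mp hB
    rw [vsub_eq_sub] at hmem
    have := hmem i j h
    rw [Matrix.sub_apply, sub_eq_zero] at this
    exact this
  refine ⟨AffineSubspace.mk' A₀ V, ⟨A₀, AffineSubspace.self_mem_mk' _ _⟩, ?_, ?_, ?_⟩
  · -- echelon
    intro B hB i₁ i₂ h12 j hne
    have h12' : (i₁ : ℕ) < (i₂ : ℕ) := Fin.lt_def.mp h12
    have hi₂r : (i₂ : ℕ) < r := by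
      by_contra hge
      apply hne
      rw [hchar B hB i₂ j (by omega), hA₀]
      simp only [Matrix.of_apply]
      exact if_neg (by omega)
    have hij : (i₂ : ℕ) ≤ (j : ℕ) := by
      by_contra hgt
      apply hne
      rw [hchar B hB i₂ j (by omega), hA₀]
      simp only [Matrix.of_apply]
      exact if_neg (by omega)
    have hi₁n : (i₁ : ℕ) < n := by have := j.isLt; omega
    refine ⟨⟨(i₁ : ℕ), hi₁n⟩, by rw [Fin.lt_def]; simpa using (by omega : (i₁ : ℕ) < (j : ℕ)), ?_⟩
    rw [hchar B hB i₁ _ (by simp), hA₀]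
    simp only [Matrix.of_apply, true_and]
    rw [if_pos (by omega : (i₁ : ℕ) < r)]
    exact one_ne_zero
  · -- rank
    intro B hB
    apply le_antisymm
    · apply rank_le_of_rows B r
      intro i hi
      funext j
      rw [hchar B hB i j (by omega), hA₀]
      simp only [Matrix.of_apply]
      exact if_neg (by omega)
    · refine le_rank_triangular B (fun k : Fin r => ⟨(k : ℕ), by omega⟩)
        (fun k : Fin r => ⟨(k : ℕ), by omega⟩) ?_ ?_
      · intro k
        rw [hchar B hB _ _ (by simp), hA₀]
        simp only [Matrix.of_apply, true_and]
        rw [if_pos (show ((⟨(k : ℕ), by omega⟩ : Fin m) : ℕ) < r from k.isLt)]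
        exact one_ne_zero
      · intro k l hlk
        have hlk' : (l : ℕ) < (k : ℕ) := Fin.lt_def.mp hlk
        rw [hchar B hB _ _ (by simp; omega), hA₀]
        simp only [Matrix.of_apply]
        exact if_neg (by simp; omega)
  · rw [AffineSubspace.direction_mk']
    rw [hV]
    exact (finrank_zeroOn (fun i j => (i : ℕ) < r ∧ (i : ℕ) < (j : ℕ))).symm

/-- extracting row `i` as a linear map -/
def rowL (K : Type*) [Field K] {m n : ℕ} (i : Fin m) :
    Matrix (Fin m) (Fin n) K →ₗ[K] (Fin n → K) where
  toFun A := A i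
  map_add' _ _ := rfl
  map_smul' _ _ := rfl

@[simp] lemma rowL_apply (i : Fin m) (A : Matrix (Fin m) (Fin n) K) : rowL K i A = A i := rfl

lemma upper (hrm : r ≤ m) (hrn : r ≤ n) (S : AffineSubspace K (Matrix (Fin m) (Fin n) K))
    (A₀ : Matrix (Fin m) (Fin n) K) (hA₀ : A₀ ∈ S)
    (hech : ∀ A ∈ S, RowEchelon A) (hrank : ∀ A ∈ S, A.rank = r) :
    finrank K S.direction + r
      ≤ Fintype.card {p : Fin m × Fin n // (p.1 : ℕ) < r ∧ (p.1 : ℕ) ≤ (p.2 : ℕ)} := by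
  classical
  have hstruct : ∀ A ∈ S, (∀ i : Fin m, r ≤ (i : ℕ) → A i = 0)
      ∧ (∀ i : Fin m, (i : ℕ) < r → A i ≠ 0) :=
    fun A hA => echelon_struct (hech A hA) (hrank A hA)
  have hcol : ∀ A ∈ S, ∀ (i : Fin m) (j : Fin n), A i j ≠ 0 → (i : ℕ) ≤ (j : ℕ) :=
    fun A hA => echelon_col_ge (hech A hA)
  set W : Submodule K (Matrix (Fin m) (Fin n) K) :=
    zeroOn K (fun i j => (i : ℕ) < r ∧ (i : ℕ) ≤ (j : ℕ)) with hW
  have hSW : ∀ A ∈ S, A ∈ W := by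
    intro A hA i j h
    rw [not_and_or, not_lt, not_le] at h
    rcases h with h | h
    · exact congrFun ((hstruct A hA).1 i h) j
    · by_contra hne
      have := hcol A hA i j hne
      omega
  have hdirW : S.direction ≤ W := by
    intro D hD
    rw [← SetLike.mem_coe, AffineSubspace.coe_direction_eq_vsub_set ⟨A₀, hA₀⟩] at hD
    obtain ⟨A, hA, B, hB, rfl⟩ := hD
    exact W.sub_mem (hSW A hA) (hSW B hB)
  -- the functionals
  have hrow : ∀ k : Fin r, ∃ φ : Module.Dual K (Fin n → K),
      φ (A₀ ⟨(k : ℕ), lt_of_lt_of_le k.isLt hrm⟩) = 1 ∧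
      ∀ D ∈ S.direction, φ (D ⟨(k : ℕ), lt_of_lt_of_le k.isLt hrm⟩) = 0 := by
    intro k
    set i : Fin m := ⟨(k : ℕ), lt_of_lt_of_le k.isLt hrm⟩ with hi
    set U : Submodule K (Fin n → K) := Submodule.map (rowL K i) S.direction with hU
    have hx : A₀ i ∉ U := by
      rintro ⟨D, hD, hDrow⟩
      have hmem : A₀ - D ∈ S := by
        have := AffineSubspace.vadd_mem_of_mem_direction (S.direction.neg_mem hD) hA₀
        simpa [vadd_eq_add, neg_add_eq_sub] using this
      have hz : (A₀ - D) i = 0 := by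
        funext j
        have : D i j = A₀ i j := by rw [← hDrow]; rfl
        simp [Matrix.sub_apply, this]
      exact (hstruct _ hmem).2 i k.isLt hz
    obtain ⟨f, hf0, hfbot⟩ := U.exists_dual_map_eq_bot_of_notMem hx inferInstance
    refine ⟨(f (A₀ i))⁻¹ • f, by simp [smul_eq_mul, inv_mul_cancel₀ hf0], ?_⟩
    intro D hD
    have hfd : f (D i) = 0 := by
      have : f (D i) ∈ U.map f := ⟨D i, ⟨D, hD, rfl⟩, rfl⟩
      rwa [hfbot, Submodule.mem_bot] at this
    simp [hfd]
  choose φ hφ1 hφ0 using hrow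
  set L : Matrix (Fin m) (Fin n) K →ₗ[K] (Fin r → K) :=
    LinearMap.pi (fun k => (φ k).comp (rowL K ⟨(k : ℕ), lt_of_lt_of_le k.isLt hrm⟩)) with hL
  have hLV : ∀ D ∈ S.direction, L D = 0 := by
    intro D hD
    funext k
    exact hφ0 k D hD
  have hsurj : ∀ c : Fin r → K, ∃ D ∈ W, L D = c := by
    intro c
    refine ⟨Matrix.of fun (i : Fin m) (j : Fin n) => if h : (i : ℕ) < r then c ⟨(i : ℕ), h⟩ * A₀ i j else 0, ?_, ?_⟩
    · intro i j h
      rw [not_and_or, not_lt, not_le] at h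
      simp only [Matrix.of_apply]
      rcases h with h | h
      · exact dif_neg (by omega)
      · rcases Nat.lt_or_ge (i : ℕ) r with h' | h'
        · rw [dif_pos h']
          have hz : A₀ i j = 0 := by
            by_contra hne
            have := hcol A₀ hA₀ i j hne
            omega
          rw [hz, mul_zero]
        · exact dif_neg (by omega)
    · funext k
      set i' : Fin m := ⟨(k : ℕ), lt_of_lt_of_le k.isLt hrm⟩ with hi'
      have hk : (i' : ℕ) < r := k.isLt
      have hkk : (⟨(i' : ℕ), hk⟩ : Fin r) = k := Fin.ext rfl
      have hrowD : (Matrix.of fun (i : Fin m) (j : Fin n) =>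
            if h : (i : ℕ) < r then c ⟨(i : ℕ), h⟩ * A₀ i j else 0) i'
          = c k • A₀ i' := by
        funext j
        simp only [Matrix.of_apply, Pi.smul_apply, smul_eq_mul, dif_pos hk, hkk]
      show (φ k) ((rowL K i') (Matrix.of fun (i : Fin m) (j : Fin n) =>
            if h : (i : ℕ) < r then c ⟨(i : ℕ), h⟩ * A₀ i j else 0)) = c k
      rw [rowL_apply, hrowD, map_smul, hφ1, smul_eq_mul, mul_one]
  -- dimension count
  have hrange : LinearMap.range (L.domRestrict W) = ⊤ := by
    rw [LinearMap.range_eq_top]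
    intro c
    obtain ⟨D, hDW, hDc⟩ := hsurj c
    exact ⟨⟨D, hDW⟩, hDc⟩
  have hker : finrank K S.direction ≤ finrank K (LinearMap.ker (L.domRestrict W)) := by
    have hle : Submodule.comap W.subtype S.direction ≤ LinearMap.ker (L.domRestrict W) := by
      intro x hx
      rw [LinearMap.mem_ker, LinearMap.domRestrict_apply]
      exact hLV _ hx
    calc finrank K S.direction
        = finrank K (Submodule.comap W.subtype S.direction) :=
          (Submodule.comapSubtypeEquivOfLe hdirW).finrank_eq.symm
      _ ≤ _ := Submodule.finrank_mono hle
  have hcount := LinearMap.finrank_range_add_finrank_ker (L.domRestrict W)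
  rw [hrange, finrank_top, Module.finrank_fintype_fun_eq_card, Fintype.card_fin] at hcount
  have hWfr : finrank K W = Fintype.card
      {p : Fin m × Fin n // (p.1 : ℕ) < r ∧ (p.1 : ℕ) ≤ (p.2 : ℕ)} := by
    rw [hW]
    exact finrank_zeroOn _
  omega

end Stmt10

theorem stmt10 (K : Type*) [Field K] (m n r : ℕ)
    (hK : (r + 1 : Cardinal) ≤ Cardinal.mk K)
    (hrm : r ≤ m) (hrn : r ≤ n) :
    IsGreatest {d : ℕ | ∃ S : AffineSubspace K (Matrix (Fin m) (Fin n) K),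
        (S : Set (Matrix (Fin m) (Fin n) K)).Nonempty ∧
        (∀ A ∈ S, RowEchelon A) ∧ (∀ A ∈ S, A.rank = r) ∧
        d = Module.finrank K S.direction}
      (r * n - r * (r + 1) / 2) := by
  classical
  constructor
  · obtain ⟨S, hne, hech, hrank, hcard⟩ := Stmt10.lower (K := K) hrm hrn
    exact ⟨S, hne, hech, hrank, by rw [← hcard, Stmt10.card1 hrm hrn]⟩
  · rintro d ⟨S, ⟨A₀, hA₀⟩, hech, hrank, rfl⟩
    have h := Stmt10.upper hrm hrn S A₀ hA₀ hech hrank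
    rw [Stmt10.card2 hrm hrn] at h
    have h1 : (∑ k ∈ Finset.range r, (n - k)) + ∑ k ∈ Finset.range r, k = r * n := by
      rw [← Finset.sum_add_distrib]
      rw [Finset.sum_congr rfl (fun k hk => by
        have : k < r := Finset.mem_range.mp hk
        omega : ∀ k ∈ Finset.range r, (n - k) + k = n)]
      rw [Finset.sum_const, Finset.card_range, smul_eq_mul]
    have h2 : (∑ k ∈ Finset.range r, k) * 2 = r * (r - 1) := Finset.sum_range_id_mul_two r
    have h3 : r * (r + 1) = r * (r - 1) + 2 * r := by
      cases r with
      | zero => simp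
      | succ s =>
        simp only [Nat.succ_sub_one]
        ring
    omega
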